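/- Equivalence-implies-equality Lemma. Let β ∈ [0,1], n ∈ ℕ, and let Δ̲ and Δ̰ : {k ∈ ℕ₀^({0,1}²) : k₊₊ = n} → [−1,1] be two lower β-confidence bounds for the parameter q ↦ q₀₁ − q₁₀ in the multinomial model M = (M_{n,q} : q ∈ Prob({0,1}²)) that are equivalent, i.e. M_{n,q}(Δ̲ ≥ t) = M_{n,q}(Δ̰ ≥ t) for every q ∈ Prob({0,1}²) and every t < q₀₁ − q₁₀. Then Δ̲ = Δ̰. -/

import Mathlib

open scoped BigOperators

noncomputable section

/-- `p` is a discrete probability density on the finite set `X`,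
i.e. a function `X → [0,1]` summing to `1`. -/
def IsProb {X : Type*} [Fintype X] (p : X → ℝ) : Prop :=
  (∀ x, 0 ≤ p x ∧ p x ≤ 1) ∧ ∑ x, p x = 1

/-- `χ` is a Markov transition density: `χ x` is a probability density for each `x`. -/
def IsMarkov {X Y : Type*} [Fintype Y] (χ : X → Y → ℝ) : Prop :=
  ∀ x, IsProb (χ x)

/-- The mixture density `μ₁(π,χ)` on `{0,1}` (indices: `χ i j = χ_{j|i}`). -/
def mu1 (π : Fin 2 → ℝ) (χ : Fin 2 → Fin 2 → ℝ) : Fin 2 → ℝ :=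
  fun j => ∑ i, π i * χ i j

/-- The mixture density `μ₂(π,χ)` on `{0,1}²` (indices: `χ i j = χ_{j|i}`). -/
def mu2 (π : Fin 2 → ℝ) (χ : Fin 2 → Fin 2 × Fin 2 → ℝ) : Fin 2 × Fin 2 → ℝ :=
  fun j => ∑ i, π i * χ i j

/-- First-test characteristic: `chi1 χ i ι = χ^{(1)}_{ι|i} = χ_{ι0|i} + χ_{ι1|i}`. -/
def chi1 (χ : Fin 2 → Fin 2 × Fin 2 → ℝ) : Fin 2 → Fin 2 → ℝ :=
  fun i ι => χ i (ι, 0) + χ i (ι, 1)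

/-- Second-test characteristic: `chi2 χ i ι = χ^{(2)}_{ι|i} = χ_{0ι|i} + χ_{1ι|i}`. -/
def chi2 (χ : Fin 2 → Fin 2 × Fin 2 → ℝ) : Fin 2 → Fin 2 → ℝ :=
  fun i ι => χ i (0, ι) + χ i (1, ι)

/-- The multinomial point mass `M_{n,q}({k}) = n! ∏_x q_x^{k_x}/k_x!`. -/
def mPMF {X : Type*} [Fintype X] (n : ℕ) (q : X → ℝ) (k : X → ℕ) : ℝ :=
  (n.factorial : ℝ) * ∏ x, q x ^ k x / ((k x).factorial : ℝ)

/-- `mProb n q S` is the probability, under the multinomial distribution `M_{n,q}`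
(supported on `{k : Σ_x k_x = n}`), of the event `S`. -/
def mProb {X : Type*} [Fintype X] (n : ℕ) (q : X → ℝ) (S : Set (X → ℕ)) : ℝ :=
  ∑' k : X → ℕ, Set.indicator {k | (∑ x, k x) = n ∧ k ∈ S} (mPMF n q) k

namespace Stmt19Aux

abbrev XX := Fin 2 × Fin 2

lemma sum4 (f : XX → ℝ) : ∑ x, f x = f (0,0) + f (0,1) + f (1,0) + f (1,1) := by
  rw [Fintype.sum_prod_type]
  simp [Fin.sum_univ_two]
  ring

lemma sum4n (f : XX → ℕ) : ∑ x, f x = f (0,0) + f (0,1) + f (1,0) + f (1,1) := by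
  rw [Fintype.sum_prod_type]
  simp [Fin.sum_univ_two]
  ring

/-- exponents for the curve `s ↦ qs n s` in the simplex -/
def aa (n : ℕ) : XX → ℕ := fun x =>
  if x = (0,0) then 1 else if x = (0,1) then 0 else if x = (1,0) then n+1 else (n+1)*(n+1)

@[simp] lemma aa00 (n : ℕ) : aa n (0,0) = 1 := rfl
@[simp] lemma aa01 (n : ℕ) : aa n (0,1) = 0 := rfl
@[simp] lemma aa10 (n : ℕ) : aa n (1,0) = n+1 := rfl
@[simp] lemma aa11 (n : ℕ) : aa n (1,1) = (n+1)*(n+1) := rfl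

/-- the normalizer -/
def NN (n : ℕ) (s : ℝ) : ℝ := 1 + s + s^(n+1) + s^((n+1)*(n+1))

def qs (n : ℕ) (s : ℝ) : XX → ℝ := fun x => s ^ (aa n x) / NN n s

/-- `s`-exponent of the monomial corresponding to `k` -/
def ee (n : ℕ) (k : XX → ℕ) : ℕ := k (0,0) + (n+1) * (k (1,0) + (n+1) * k (1,1))

lemma NN_ge_one (n : ℕ) {s : ℝ} (hs : 0 ≤ s) : 1 ≤ NN n s := by
  have h0 : 0 ≤ s^(n+1) := pow_nonneg hs _
  have h1 : 0 ≤ s^((n+1)*(n+1)) := pow_nonneg hs _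
  unfold NN; linarith

lemma NN_pos (n : ℕ) {s : ℝ} (hs : 0 ≤ s) : 0 < NN n s :=
  lt_of_lt_of_le one_pos (NN_ge_one n hs)

lemma isProb_qs (n : ℕ) {s : ℝ} (hs : 0 < s) (hs1 : s ≤ 1) : IsProb (qs n s) := by
  have hN1 : 1 ≤ NN n s := NN_ge_one n hs.le
  have hN : 0 < NN n s := NN_pos n hs.le
  constructor
  · intro x
    have hp : 0 ≤ s ^ aa n x := pow_nonneg hs.le _
    have hle : s ^ aa n x ≤ NN n s := by
      have h0 : s ^ aa n x ≤ 1 := pow_le_one₀ hs.le hs1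
      linarith
    exact ⟨div_nonneg hp hN.le, (div_le_one hN).mpr hle⟩
  · rw [sum4 (qs n s)]
    simp only [qs, aa00, aa01, aa10, aa11, pow_zero, pow_one]
    rw [← add_div, ← add_div, ← add_div, div_eq_one_iff_eq hN.ne']
    unfold NN; ring

lemma diff_gt (n : ℕ) {s t : ℝ} (ht : t < 1) (hs : 0 < s) (hs2 : s ≤ 1/2)
    (hs8 : s < (1 - t)/8) : t < qs n s (0,1) - qs n s (1,0) := by
  have hN1 : 1 ≤ NN n s := NN_ge_one n hs.le
  have hN : 0 < NN n s := NN_pos n hs.le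
  have hp1 : s ^ (n+1) ≤ s := by
    calc s^(n+1) ≤ s^1 := pow_le_pow_of_le_one hs.le (by linarith) (by omega)
    _ = s := pow_one s
  have hp2 : s ^ ((n+1)*(n+1)) ≤ s := by
    calc s^((n+1)*(n+1)) ≤ s^1 := pow_le_pow_of_le_one hs.le (by linarith) (by nlinarith)
    _ = s := pow_one s
  have hNle : NN n s ≤ 1 + 3*s := by unfold NN; linarith
  simp only [qs, aa01, aa10, pow_zero]
  rw [div_sub_div_same, lt_div_iff₀ hN]
  have hkey : t * NN n s ≤ t + (NN n s - 1) := by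
    nlinarith [mul_nonneg (by linarith : (0:ℝ) ≤ 1 - t) (by linarith : (0:ℝ) ≤ NN n s - 1)]
  linarith

lemma prod_qs_pow (n : ℕ) {s : ℝ} (hs : 0 < s) (k : XX → ℕ) (hk : ∑ x, k x = n) :
    ∏ x, qs n s x ^ k x = s ^ ee n k / NN n s ^ n := by
  have hN : 0 < NN n s := NN_pos n hs.le
  have hsum : k (0,0) + k (0,1) + k (1,0) + k (1,1) = n := by rw [← sum4n k]; exact hk
  rw [Fintype.prod_prod_type]
  simp only [Fin.prod_univ_two]
  simp only [qs, aa00, aa01, aa10, aa11]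
  rw [show NN n s ^ n = NN n s ^ (k (0,0) + k (0,1) + k (1,0) + k (1,1)) by rw [hsum]]
  rw [ee]
  field_simp
  have hN' : NN n s ≠ 0 := hN.ne'
  simp only [div_pow, one_pow]
  field_simp
  ring

lemma ee_inj (n : ℕ) {k k' : XX → ℕ} (hk : ∑ x, k x = n) (hk' : ∑ x, k' x = n)
    (h : ee n k = ee n k') : k = k' := by
  rw [sum4n] at hk hk'
  have b1 : k (0,0) < n+1 := by omega
  have b1' : k' (0,0) < n+1 := by omega
  have b2 : k (1,0) < n+1 := by omega
  have b2' : k' (1,0) < n+1 := by omega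
  unfold ee at h
  have h00 : k (0,0) = k' (0,0) := by
    have hh := congrArg (· % (n+1)) h
    simp only [Nat.add_mul_mod_self_left] at hh
    rwa [Nat.mod_eq_of_lt b1, Nat.mod_eq_of_lt b1'] at hh
  have h2 : k (1,0) + (n+1) * k (1,1) = k' (1,0) + (n+1) * k' (1,1) := by
    have hh := congrArg (· / (n+1)) h
    simp only [Nat.add_mul_div_left _ _ (Nat.succ_pos n)] at hh
    rwa [Nat.div_eq_of_lt b1, Nat.div_eq_of_lt b1', Nat.zero_add, Nat.zero_add] at hh
  have h10 : k (1,0) = k' (1,0) := by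
    have hh := congrArg (· % (n+1)) h2
    simp only [Nat.add_mul_mod_self_left] at hh
    rwa [Nat.mod_eq_of_lt b2, Nat.mod_eq_of_lt b2'] at hh
  have h11 : k (1,1) = k' (1,1) := by
    have hh := congrArg (· / (n+1)) h2
    simp only [Nat.add_mul_div_left _ _ (Nat.succ_pos n)] at hh
    rwa [Nat.div_eq_of_lt b2, Nat.div_eq_of_lt b2', Nat.zero_add, Nat.zero_add] at hh
  have h01 : k (0,1) = k' (0,1) := by omega
  funext x
  obtain ⟨i, j⟩ := x
  fin_cases i <;> fin_cases j <;> assumption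

open Classical in
lemma mProb_eq_sum (n : ℕ) (q : XX → ℝ) (S : Set (XX → ℕ)) :
    mProb n q S = ∑ k ∈ (Fintype.piFinset fun _ : XX => Finset.range (n+1)).filter
      (fun k => ∑ x, k x = n), if k ∈ S then mPMF n q k else 0 := by
  classical
  rw [mProb]
  rw [tsum_eq_sum (s := (Fintype.piFinset fun _ : XX => Finset.range (n+1)).filter
      (fun k => ∑ x, k x = n)) ?_]
  · apply Finset.sum_congr rfl
    intro k hkF
    have hsum : ∑ x, k x = n := (Finset.mem_filter.mp hkF).2
    by_cases hS : k ∈ S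
    · rw [Set.indicator_of_mem (show k ∈ {k | (∑ x, k x) = n ∧ k ∈ S} from ⟨hsum, hS⟩),
        if_pos hS]
    · rw [Set.indicator_of_notMem (by simp [Set.mem_setOf_eq, hS]), if_neg hS]
  · intro k hk
    apply Set.indicator_of_notMem
    intro hmem
    obtain ⟨hsum, -⟩ := hmem
    apply hk
    refine Finset.mem_filter.mpr ⟨Fintype.mem_piFinset.mpr fun x => Finset.mem_range.mpr ?_, hsum⟩
    have : k x ≤ ∑ y, k y := Finset.single_le_sum (fun _ _ => Nat.zero_le _) (Finset.mem_univ x)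
    omega

lemma key (n : ℕ) (S1 S2 : Set (XX → ℕ)) (δ : ℝ) (hδ : 0 < δ)
    (h : ∀ s ∈ Set.Ioo (0:ℝ) δ, mProb n (qs n s) S1 = mProb n (qs n s) S2)
    (k0 : XX → ℕ) (hk0 : ∑ x, k0 x = n) : k0 ∈ S1 ↔ k0 ∈ S2 := by
  classical
  set F := (Fintype.piFinset fun _ : XX => Finset.range (n+1)).filter
      (fun k => ∑ x, k x = n) with hF
  have hk0F : k0 ∈ F := by
    refine Finset.mem_filter.mpr ⟨Fintype.mem_piFinset.mpr fun x => Finset.mem_range.mpr ?_, hk0⟩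
    have : k0 x ≤ ∑ y, k0 y := Finset.single_le_sum (fun _ _ => Nat.zero_le _) (Finset.mem_univ x)
    omega
  set d : (XX → ℕ) → ℝ := fun k => (if k ∈ S1 then (1:ℝ) else 0) - (if k ∈ S2 then 1 else 0)
    with hd
  set c : (XX → ℕ) → ℝ := fun k => (n.factorial : ℝ) / ∏ x, ((k x).factorial : ℝ) with hc
  set P : Polynomial ℝ := ∑ k ∈ F, Polynomial.C (d k * c k) * Polynomial.X ^ (ee n k) with hP
  have hroot : ∀ s ∈ Set.Ioo (0:ℝ) δ, P.eval s = 0 := by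
    intro s hsmem
    obtain ⟨hs0, hsδ⟩ := hsmem
    have hN : (0:ℝ) < NN n s := NN_pos n hs0.le
    have heq := h s ⟨hs0, hsδ⟩
    rw [mProb_eq_sum, mProb_eq_sum] at heq
    have hm : ∀ k ∈ F, mPMF n (qs n s) k = c k * (s ^ ee n k / NN n s ^ n) := by
      intro k hkF
      have hks : ∑ x, k x = n := (Finset.mem_filter.mp hkF).2
      rw [mPMF, Finset.prod_div_distrib, prod_qs_pow n hs0 k hks, hc]
      ring
    have hzero : ∑ k ∈ F, d k * mPMF n (qs n s) k = 0 := by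
      have hsplit : ∑ k ∈ F, d k * mPMF n (qs n s) k
          = (∑ k ∈ F, if k ∈ S1 then mPMF n (qs n s) k else 0)
            - (∑ k ∈ F, if k ∈ S2 then mPMF n (qs n s) k else 0) := by
        rw [← Finset.sum_sub_distrib]
        apply Finset.sum_congr rfl
        intro k _
        by_cases h1 : k ∈ S1 <;> by_cases h2 : k ∈ S2 <;> simp [hd, h1, h2]
      rw [← hF] at heq
      rw [hsplit, heq, sub_self]
    have h3 : ∑ k ∈ F, d k * (c k * (s ^ ee n k / NN n s ^ n)) = 0 := by
      rw [← hzero]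
      apply Finset.sum_congr rfl
      intro k hkF
      rw [hm k hkF]
    have h4 : ∑ k ∈ F, (d k * c k) * s ^ ee n k = 0 := by
      have hNn : (NN n s ^ n) ≠ 0 := pow_ne_zero _ hN.ne'
      calc ∑ k ∈ F, (d k * c k) * s ^ ee n k
          = (∑ k ∈ F, d k * (c k * (s ^ ee n k / NN n s ^ n))) * NN n s ^ n := by
            rw [Finset.sum_mul]
            apply Finset.sum_congr rfl
            intro k _
            field_simp
        _ = 0 := by rw [h3, zero_mul]
    rw [hP, Polynomial.eval_finset_sum]
    simpa [Polynomial.eval_mul, Polynomial.eval_pow] using h4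
  have hP0 : P = 0 :=
    Polynomial.eq_zero_of_infinite_isRoot _ ((Set.Ioo_infinite hδ).mono hroot)
  have hcoeff : d k0 * c k0 = 0 := by
    have h5 : P.coeff (ee n k0) = d k0 * c k0 := by
      rw [hP, Polynomial.finset_sum_coeff]
      rw [Finset.sum_eq_single_of_mem k0 hk0F]
      · rw [Polynomial.coeff_C_mul, Polynomial.coeff_X_pow, if_pos rfl, mul_one]
      · intro k hkF hne
        have hee : ee n k ≠ ee n k0 :=
          fun heq => hne (ee_inj n (Finset.mem_filter.mp hkF).2 hk0 heq)
        rw [Polynomial.coeff_C_mul, Polynomial.coeff_X_pow, if_neg (Ne.symm hee), mul_zero]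
    rw [hP0, Polynomial.coeff_zero] at h5
    exact h5.symm
  have hc0 : 0 < c k0 := by
    rw [hc]
    apply div_pos (Nat.cast_pos.mpr n.factorial_pos)
    apply Finset.prod_pos
    intro x _
    exact_mod_cast (k0 x).factorial_pos
  have hd0 : d k0 = 0 := by
    rcases mul_eq_zero.mp hcoeff with h' | h'
    · exact h'
    · exact absurd h' hc0.ne'
  constructor <;> intro hmem <;> by_contra hnot <;> simp [hd, hmem, hnot] at hd0

lemma aux (n : ℕ) (Δ₁ Δ₂ : ((Fin 2 × Fin 2) → ℕ) → ℝ)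
    (hΔ₂ : ∀ k, (∑ x, k x) = n → Δ₂ k ≤ 1)
    (hequiv : ∀ q : Fin 2 × Fin 2 → ℝ, IsProb q → ∀ t : ℝ, t < q (0, 1) - q (1, 0) →
      mProb n q {k | t ≤ Δ₁ k} = mProb n q {k | t ≤ Δ₂ k})
    (k : (Fin 2 × Fin 2) → ℕ) (hk : (∑ x, k x) = n) : ¬ (Δ₁ k < Δ₂ k) := by
  intro hlt
  set t := (Δ₁ k + Δ₂ k) / 2 with htdef
  have ht1 : Δ₁ k < t := by rw [htdef]; linarith
  have ht2 : t < Δ₂ k := by rw [htdef]; linarith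
  have htlt1 : t < 1 := lt_of_lt_of_le ht2 (hΔ₂ k hk)
  set δ := min (1/2 : ℝ) ((1 - t)/8) with hδdef
  have hδpos : 0 < δ := lt_min (by norm_num) (by linarith)
  have harg : ∀ s ∈ Set.Ioo (0:ℝ) δ,
      mProb n (qs n s) {k | t ≤ Δ₁ k} = mProb n (qs n s) {k | t ≤ Δ₂ k} := by
    intro s hs
    obtain ⟨hs0, hsδ⟩ := hs
    have hs2 : s ≤ 1/2 := le_trans hsδ.le (min_le_left _ _)
    have hs8 : s < (1 - t)/8 := lt_of_lt_of_le hsδ (min_le_right _ _)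
    exact hequiv (qs n s) (isProb_qs n hs0 (by linarith)) t (diff_gt n htlt1 hs0 hs2 hs8)
  have hiff := key n {k | t ≤ Δ₁ k} {k | t ≤ Δ₂ k} δ hδpos harg k hk
  have : t ≤ Δ₁ k := hiff.mpr ht2.le
  linarith

end Stmt19Aux

/-- Equivalence-implies-equality Lemma: two equivalent lower β-confidence bounds for
`q ↦ q₀₁ - q₁₀` in the multinomial model coincide on `{k : k₊₊ = n}`. -/
theorem stmt_19 (β : ℝ) (hβ : β ∈ Set.Icc (0:ℝ) 1) (n : ℕ) (hn : 0 < n)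
    (Δ₁ Δ₂ : ((Fin 2 × Fin 2) → ℕ) → ℝ)
    (hΔ₁ : ∀ k, (∑ x, k x) = n → Δ₁ k ∈ Set.Icc (-1:ℝ) 1)
    (hΔ₂ : ∀ k, (∑ x, k x) = n → Δ₂ k ∈ Set.Icc (-1:ℝ) 1)
    (hcb₁ : ∀ q : Fin 2 × Fin 2 → ℝ, IsProb q →
      β ≤ mProb n q {k | Δ₁ k ≤ q (0, 1) - q (1, 0)})
    (hcb₂ : ∀ q : Fin 2 × Fin 2 → ℝ, IsProb q →
      β ≤ mProb n q {k | Δ₂ k ≤ q (0, 1) - q (1, 0)})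
    (hequiv : ∀ q : Fin 2 × Fin 2 → ℝ, IsProb q → ∀ t : ℝ, t < q (0, 1) - q (1, 0) →
      mProb n q {k | t ≤ Δ₁ k} = mProb n q {k | t ≤ Δ₂ k}) :
    ∀ k : (Fin 2 × Fin 2) → ℕ, (∑ x, k x) = n → Δ₁ k = Δ₂ k := by
  intro k hk
  by_contra hne
  rcases lt_or_gt_of_ne hne with h | h
  · exact Stmt19Aux.aux n Δ₁ Δ₂ (fun k hk => (hΔ₂ k hk).2) hequiv k hk h
  · exact Stmt19Aux.aux n Δ₂ Δ₁ (fun k hk => (hΔ₁ k hk).2)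
      (fun q hq t ht => (hequiv q hq t ht).symm) k hk h

end
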